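/- arXiv:0907.4488 — 5 statements merged into one kernel-verified Lean document; each statement's English description precedes it below -/
import Mathlib

section
/- Let B be a positive integer and let G = (V, E) be a finite simple graph with m edges in which every vertex has degree at most B. Then G has a vertex cover C with B·|C| = m if and only if G is bipartite, i.e. V can be partitioned into two independent sets A and V∖A, with B·|A| = m (that is, some bipartition class has size exactly m/B). -/
/-- Let B be a positive integer and let G = (V, E) be a finite simple graph
with m edges in which every vertex has degree at most B. Then G has a vertex cover C with
B·|C| = m if and only if G is bipartite, i.e. V can be partitioned into two independent sets
A and V∖A, with B·|A| = m. -/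
theorem stmt_0 {V : Type*} [Fintype V] [DecidableEq V] (G : SimpleGraph V)
    [DecidableRel G.Adj] (B : ℕ) (hB : 0 < B) (hdeg : ∀ v : V, G.degree v ≤ B) :
    (∃ C : Finset V, (∀ ⦃u v : V⦄, G.Adj u v → u ∈ C ∨ v ∈ C) ∧
        B * C.card = G.edgeFinset.card)
    ↔ (∃ A : Finset V, (∀ u ∈ A, ∀ v ∈ A, ¬ G.Adj u v) ∧
        (∀ u ∈ Aᶜ, ∀ v ∈ Aᶜ, ¬ G.Adj u v) ∧
        B * A.card = G.edgeFinset.card) := by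
  constructor
  · rintro ⟨C, hcov, hcard⟩
    -- key counting: sum over edges of #(endpoints in C) equals sum of degrees over C
    have h1 : ∑ e ∈ G.edgeFinset, (C.filter (· ∈ e)).card = ∑ v ∈ C, G.degree v := by
      simp only [Finset.card_filter]
      rw [Finset.sum_comm]
      refine Finset.sum_congr rfl fun v _ => ?_
      rw [← Finset.card_filter, ← G.incidenceFinset_eq_filter v,
        G.card_incidenceFinset_eq_degree]
    have h2 : ∑ v ∈ C, G.degree v ≤ B * C.card := by
      calc ∑ v ∈ C, G.degree v ≤ ∑ _v ∈ C, B := Finset.sum_le_sum fun v _ => hdeg v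
        _ = B * C.card := by rw [Finset.sum_const, smul_eq_mul, mul_comm]
    have hone : ∀ e ∈ G.edgeFinset, 1 ≤ (C.filter (· ∈ e)).card := by
      intro e he
      induction e with
      | h u v =>
        rw [SimpleGraph.mem_edgeFinset, SimpleGraph.mem_edgeSet] at he
        rcases hcov he with h | h
        · exact Finset.card_pos.2 ⟨u, Finset.mem_filter.2 ⟨h, by simp⟩⟩
        · exact Finset.card_pos.2 ⟨v, Finset.mem_filter.2 ⟨h, by simp⟩⟩
    have h3 : G.edgeFinset.card ≤ ∑ e ∈ G.edgeFinset, (C.filter (· ∈ e)).card := by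
      calc G.edgeFinset.card = ∑ _e ∈ G.edgeFinset, 1 := by simp
        _ ≤ _ := Finset.sum_le_sum hone
    have hsum : ∑ e ∈ G.edgeFinset, (C.filter (· ∈ e)).card
        = ∑ _e ∈ G.edgeFinset, 1 := by
      have : ∑ e ∈ G.edgeFinset, (C.filter (· ∈ e)).card = G.edgeFinset.card :=
        le_antisymm (hcard ▸ h1 ▸ h2) h3
      simpa using this
    have hkey : ∀ e ∈ G.edgeFinset, (C.filter (· ∈ e)).card = 1 := by
      intro e he
      exact ((Finset.sum_eq_sum_iff_of_le hone).1 hsum.symm e he).symm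
    refine ⟨C, ?_, ?_, hcard⟩
    · intro u hu v hv hadj
      have he : s(u, v) ∈ G.edgeFinset := by
        rw [SimpleGraph.mem_edgeFinset, SimpleGraph.mem_edgeSet]; exact hadj
      have h2le : 2 ≤ (C.filter (· ∈ s(u, v))).card := by
        have hsub : ({u, v} : Finset V) ⊆ C.filter (· ∈ s(u, v)) := by
          intro x hx
          rcases Finset.mem_insert.1 hx with rfl | hx
          · exact Finset.mem_filter.2 ⟨hu, by simp⟩
          · rw [Finset.mem_singleton] at hx
            subst hx
            exact Finset.mem_filter.2 ⟨hv, by simp⟩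
        calc 2 = ({u, v} : Finset V).card := (Finset.card_pair hadj.ne).symm
          _ ≤ _ := Finset.card_le_card hsub
      rw [hkey _ he] at h2le
      omega
    · intro u hu v hv hadj
      rcases hcov hadj with h | h
      · exact (Finset.mem_compl.1 hu) h
      · exact (Finset.mem_compl.1 hv) h
  · rintro ⟨A, hA, hAc, hcard⟩
    refine ⟨A, fun u v hadj => ?_, hcard⟩
    by_contra hc
    push_neg at hc
    exact hAc u (Finset.mem_compl.2 hc.1) v (Finset.mem_compl.2 hc.2) hadj
end

section
/- Let B and k be positive integers and let G = (V, E) be a finite simple graph with m edges in which every vertex has degree at most B. If G has a vertex cover of size at most m/B + k, then there exists a set D ⊆ E with |D| ≤ kB such that the graph G − D obtained by deleting the edges of D from G is bipartite. -/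
/-- If a finite simple graph G with m edges and maximum degree at most B has a
vertex cover of size at most m/B + k, then there exists a set D of at most kB edges whose
deletion from G leaves a bipartite graph. -/
theorem stmt_2 {V : Type*} [Fintype V] [DecidableEq V] (G : SimpleGraph V)
    [DecidableRel G.Adj] (B k : ℕ) (hB : 0 < B) (hk : 0 < k)
    (hdeg : ∀ v : V, G.degree v ≤ B)
    (hcover : ∃ C : Finset V, (∀ ⦃u v : V⦄, G.Adj u v → u ∈ C ∨ v ∈ C) ∧
      (C.card : ℚ) ≤ (G.edgeFinset.card : ℚ) / B + k) :
    ∃ D : Finset (Sym2 V), ↑D ⊆ G.edgeSet ∧ D.card ≤ k * B ∧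
      ∃ A : Set V, ∀ ⦃u v : V⦄, (G.deleteEdges ↑D).Adj u v → (u ∈ A ↔ v ∉ A) := by
  classical
  obtain ⟨C, hC, hCcard⟩ := hcover
  set D : Finset (Sym2 V) := G.edgeFinset.filter (fun e => ∀ v ∈ e, v ∈ C) with hDdef
  have hDsub : ↑D ⊆ G.edgeSet := by
    intro e he
    simp only [hDdef, Finset.coe_filter, Set.mem_setOf_eq] at he
    exact (SimpleGraph.mem_edgeFinset).mp he.1
  -- per-edge lower bounds on the number of endpoints inside C
  have hone : ∀ e ∈ G.edgeFinset, 1 ≤ (C.filter (fun v => v ∈ e)).card := by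
    intro e he
    induction e with
    | _ u v =>
      have hadj : G.Adj u v := (SimpleGraph.mem_edgeFinset).mp he
      rcases hC hadj with h | h
      · exact Finset.card_pos.mpr ⟨u, Finset.mem_filter.mpr ⟨h, by simp⟩⟩
      · exact Finset.card_pos.mpr ⟨v, Finset.mem_filter.mpr ⟨h, by simp⟩⟩
  have htwo : ∀ e ∈ D, 2 ≤ (C.filter (fun v => v ∈ e)).card := by
    intro e he
    simp only [hDdef, Finset.mem_filter] at he
    obtain ⟨hee, hall⟩ := he
    induction e with
    | _ u v =>
      have hadj : G.Adj u v := (SimpleGraph.mem_edgeFinset).mp hee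
      have hsub : ({u, v} : Finset V) ⊆ C.filter (fun w => w ∈ s(u, v)) := by
        intro w hw
        rcases Finset.mem_insert.mp hw with rfl | hw
        · exact Finset.mem_filter.mpr ⟨hall w (by simp), by simp⟩
        · rcases Finset.mem_singleton.mp hw with rfl
          exact Finset.mem_filter.mpr ⟨hall w (by simp), by simp⟩
      calc 2 = ({u, v} : Finset V).card := (Finset.card_pair hadj.ne).symm
        _ ≤ _ := Finset.card_le_card hsub
  -- counting: m + |D| ≤ ∑_{v∈C} deg v
  have h1 : ∑ v ∈ C, G.degree v =
      ∑ e ∈ G.edgeFinset, (C.filter (fun v => v ∈ e)).card := by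
    have hd : ∀ v ∈ C, G.degree v = (G.edgeFinset.filter (fun e => v ∈ e)).card := by
      intro v _
      rw [← SimpleGraph.card_incidenceFinset_eq_degree,
        SimpleGraph.incidenceFinset_eq_filter]
    rw [Finset.sum_congr rfl hd]
    simp_rw [Finset.card_filter]
    exact Finset.sum_comm
  have hkey : G.edgeFinset.card + D.card ≤ ∑ v ∈ C, G.degree v := by
    rw [h1]
    have hsplit : ∑ e ∈ G.edgeFinset, (C.filter (fun v => v ∈ e)).card =
        ∑ e ∈ D, (C.filter (fun v => v ∈ e)).card +
        ∑ e ∈ G.edgeFinset.filter (fun e => ¬ ∀ v ∈ e, v ∈ C),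
          (C.filter (fun v => v ∈ e)).card := by
      rw [hDdef]
      exact (Finset.sum_filter_add_sum_filter_not _ _ _).symm
    rw [hsplit]
    have hA : 2 * D.card ≤ ∑ e ∈ D, (C.filter (fun v => v ∈ e)).card := by
      calc 2 * D.card = ∑ _e ∈ D, 2 := by rw [Finset.sum_const, smul_eq_mul, mul_comm]
        _ ≤ _ := Finset.sum_le_sum htwo
    have hB2 : (G.edgeFinset.filter (fun e => ¬ ∀ v ∈ e, v ∈ C)).card ≤
        ∑ e ∈ G.edgeFinset.filter (fun e => ¬ ∀ v ∈ e, v ∈ C),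
          (C.filter (fun v => v ∈ e)).card := by
      calc (G.edgeFinset.filter (fun e => ¬ ∀ v ∈ e, v ∈ C)).card
          = ∑ _e ∈ G.edgeFinset.filter (fun e => ¬ ∀ v ∈ e, v ∈ C), 1 := by
            rw [Finset.sum_const, smul_eq_mul, mul_one]
        _ ≤ _ := Finset.sum_le_sum fun e he => hone e (Finset.mem_filter.mp he).1
    have hcards : G.edgeFinset.card =
        D.card + (G.edgeFinset.filter (fun e => ¬ ∀ v ∈ e, v ∈ C)).card := by
      rw [hDdef]
      exact (Finset.card_filter_add_card_filter_not _).symm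
    omega
  -- degree bound: ∑_{v∈C} deg v ≤ |C| * B
  have hsum : ∑ v ∈ C, G.degree v ≤ C.card * B := by
    calc ∑ v ∈ C, G.degree v ≤ ∑ _v ∈ C, B := Finset.sum_le_sum fun v _ => hdeg v
      _ = C.card * B := by rw [Finset.sum_const, smul_eq_mul]
  -- rational arithmetic
  have hDcard : D.card ≤ k * B := by
    have hq : (G.edgeFinset.card : ℚ) + D.card ≤ G.edgeFinset.card + k * B := by
      have h3 : (G.edgeFinset.card : ℚ) + D.card ≤ (C.card : ℚ) * B := by
        have := hkey.trans hsum
        exact_mod_cast this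
      have h4 : (C.card : ℚ) * B ≤ ((G.edgeFinset.card : ℚ) / B + k) * B :=
        mul_le_mul_of_nonneg_right hCcard (by positivity)
      have h5 : ((G.edgeFinset.card : ℚ) / B + k) * B =
          G.edgeFinset.card + k * B := by
        field_simp
      linarith
    have : (D.card : ℚ) ≤ (k * B : ℕ) := by push_cast; linarith
    exact_mod_cast this
  refine ⟨D, hDsub, hDcard, ↑C, ?_⟩
  intro u v huv
  rw [SimpleGraph.deleteEdges_adj] at huv
  obtain ⟨hadj, hne⟩ := huv
  have hnotboth : ¬ (u ∈ C ∧ v ∈ C) := by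
    rintro ⟨hu, hv⟩
    apply hne
    simp only [hDdef, Finset.coe_filter, Set.mem_setOf_eq, SimpleGraph.mem_edgeFinset]
    refine ⟨hadj, fun w hw => ?_⟩
    rcases Sym2.mem_iff.mp hw with rfl | rfl
    · exact hu
    · exact hv
  rcases hC hadj with h | h
  · simpa [h] using fun hv => hnotboth ⟨h, hv⟩
  · constructor
    · intro hu _; exact hnotboth ⟨hu, h⟩
    · intro hnv; exact absurd h hnv
end

section
/- Let G = (V, E) be a finite simple graph and let D ⊆ E. Then the minimum size of a vertex cover of G equals the minimum, over all minimal vertex covers C′ of the graph G[D] (the subgraph of G whose edge set is D and whose vertex set is the set of endpoints of edges in D), of |C′| plus the minimum size of a vertex cover of the graph G − C′ obtained from G by deleting the vertices of C′. -/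
/-- A vertex cover of a simple graph: a set of vertices meeting every edge. -/
def IsVertexCover {V : Type*} (G : SimpleGraph V) (C : Set V) : Prop :=
  ∀ ⦃u v : V⦄, G.Adj u v → u ∈ C ∨ v ∈ C

/-- The minimum size of a vertex cover of `G`. -/
noncomputable def minVertexCover {V : Type*} (G : SimpleGraph V) : ℕ :=
  sInf {n : ℕ | ∃ C : Set V, IsVertexCover G C ∧ C.ncard = n}

/-- A minimal vertex cover: a vertex cover no proper subset of which is a vertex cover. -/
def IsMinimalVertexCover {V : Type*} (G : SimpleGraph V) (C : Set V) : Prop :=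
  IsVertexCover G C ∧ ∀ C' ⊆ C, IsVertexCover G C' → C' = C

/-- The subgraph `G[D]` of `G` whose edge set is `D` (its edges are the edges of `G`
belonging to `D`; vertices outside edges of `D` are isolated). -/
def edgeSubgraph {V : Type*} (G : SimpleGraph V) (D : Set (Sym2 V)) : SimpleGraph V where
  Adj u v := G.Adj u v ∧ s(u, v) ∈ D
  symm := by
    constructor
    intro u v h
    exact ⟨h.1.symm, by rw [Sym2.eq_swap]; exact h.2⟩
  loopless := by
    constructor
    intro u h
    exact G.irrefl h.1

/-- The minimum size of a vertex cover of the graph `G − C'` obtained from `G` by deleting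
the vertices of `C'` together with all incident edges. -/
noncomputable def minVertexCoverDel {V : Type*} (G : SimpleGraph V) (C' : Set V) : ℕ :=
  sInf {n : ℕ | ∃ C : Set V, C ⊆ C'ᶜ ∧
    (∀ ⦃u v : V⦄, G.Adj u v → u ∉ C' → v ∉ C' → u ∈ C ∨ v ∈ C) ∧ C.ncard = n}

lemma exists_minimal_subcover {V : Type*} [Fintype V] (H : SimpleGraph V) :
    ∀ (C : Set V), IsVertexCover H C → ∃ C', C' ⊆ C ∧ IsMinimalVertexCover H C' := by
  have key : ∀ n (C : Set V), C.ncard = n → IsVertexCover H C →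
      ∃ C', C' ⊆ C ∧ IsMinimalVertexCover H C' := by
    intro n
    induction n using Nat.strong_induction_on with
    | _ n ih =>
      intro C hn hC
      by_cases h : ∀ C'' ⊆ C, IsVertexCover H C'' → C'' = C
      · exact ⟨C, subset_rfl, hC, h⟩
      · push_neg at h
        obtain ⟨C'', hsub, hcov, hne⟩ := h
        have hlt : C''.ncard < n :=
          hn ▸ Set.ncard_lt_ncard (hsub.ssubset_of_ne hne) (Set.toFinite C)
        obtain ⟨C', h1, h2⟩ := ih _ hlt C'' rfl hcov
        exact ⟨C', h1.trans hsub, h2⟩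
  intro C hC
  exact key C.ncard C rfl hC

/-- The minimum size of a vertex cover of G equals the minimum, over all
minimal vertex covers C′ of G[D], of |C′| plus the minimum size of a vertex cover of
G − C′. -/
theorem stmt_7 {V : Type*} [Fintype V] (G : SimpleGraph V)
    (D : Set (Sym2 V)) (hD : D ⊆ G.edgeSet) :
    minVertexCover G =
      sInf {n : ℕ | ∃ C' : Set V, IsMinimalVertexCover (edgeSubgraph G D) C' ∧
        n = C'.ncard + minVertexCoverDel G C'} := by
  set m := minVertexCover G with hm
  have hSne : {n : ℕ | ∃ C : Set V, IsVertexCover G C ∧ C.ncard = n}.Nonempty :=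
    ⟨(Set.univ : Set V).ncard, Set.univ, fun u v _ => Or.inl (Set.mem_univ u), rfl⟩
  obtain ⟨Cmin, hCmin, hCmincard'⟩ := Nat.sInf_mem hSne
  have hCmincard : Cmin.ncard = m := hCmincard'
  have lower : ∀ n ∈ {n : ℕ | ∃ C' : Set V, IsMinimalVertexCover (edgeSubgraph G D) C' ∧
      n = C'.ncard + minVertexCoverDel G C'}, m ≤ n := by
    rintro n ⟨C', hC', rfl⟩
    have hdelne : {n : ℕ | ∃ C : Set V, C ⊆ C'ᶜ ∧
        (∀ ⦃u v : V⦄, G.Adj u v → u ∉ C' → v ∉ C' → u ∈ C ∨ v ∈ C) ∧ C.ncard = n}.Nonempty :=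
      ⟨(C'ᶜ : Set V).ncard, C'ᶜ, subset_rfl, fun u v _ hu _ => Or.inl hu, rfl⟩
    obtain ⟨C, hCsub, hCcov, hCcard⟩ := Nat.sInf_mem hdelne
    have hcover : IsVertexCover G (C' ∪ C) := by
      intro u v huv
      by_cases hu : u ∈ C'
      · exact Or.inl (Or.inl hu)
      by_cases hv : v ∈ C'
      · exact Or.inr (Or.inl hv)
      rcases hCcov huv hu hv with h | h
      · exact Or.inl (Or.inr h)
      · exact Or.inr (Or.inr h)
    have h1 : m ≤ (C' ∪ C).ncard := Nat.sInf_le ⟨C' ∪ C, hcover, rfl⟩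
    calc m ≤ (C' ∪ C).ncard := h1
      _ ≤ C'.ncard + C.ncard := Set.ncard_union_le _ _
      _ = C'.ncard + minVertexCoverDel G C' := by rw [hCcard]; rfl
  have hsubcov : IsVertexCover (edgeSubgraph G D) Cmin := fun u v h => hCmin h.1
  obtain ⟨C', hC'sub, hC'min⟩ := exists_minimal_subcover (edgeSubgraph G D) Cmin hsubcov
  have hdel : minVertexCoverDel G C' ≤ (Cmin \ C').ncard := by
    apply Nat.sInf_le
    refine ⟨Cmin \ C', fun x hx => hx.2, ?_, rfl⟩
    intro u v huv hu hv
    rcases hCmin huv with h | h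
    · exact Or.inl ⟨h, hu⟩
    · exact Or.inr ⟨h, hv⟩
  have hdiff : (Cmin \ C').ncard = m - C'.ncard := by
    rw [Set.ncard_diff hC'sub (Set.toFinite C'), hCmincard]
  have hle : C'.ncard ≤ m := hCmincard ▸ Set.ncard_le_ncard hC'sub (Set.toFinite Cmin)
  have hmem : C'.ncard + minVertexCoverDel G C' ∈
      {n : ℕ | ∃ C' : Set V, IsMinimalVertexCover (edgeSubgraph G D) C' ∧
        n = C'.ncard + minVertexCoverDel G C'} := ⟨C', hC'min, rfl⟩
  have hub : C'.ncard + minVertexCoverDel G C' ≤ m := by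
    have := hdiff ▸ hdel
    omega
  exact le_antisymm (le_trans (lower _ (Nat.sInf_mem ⟨_, hmem⟩)) (le_of_eq rfl))
    (le_trans (Nat.sInf_le hmem) hub)
end

section
/- Let B and k be positive integers and let G = (V, E) be a finite simple graph on n vertices with maximum degree at most B. Let G′ = (V′, E′) be the graph constructed from G as follows: for every vertex v ∈ V take a choice gadget that is a complete bipartite graph K_{B+1,B+2} (with a smaller side of B+1 vertices and a larger side of B+2 vertices); for every vertex v ∈ V take a domination gadget consisting of a vertex v_d together with B − d(v) + 1 pendant leaves attached to v_d, where d(v) is the degree of v in G; and for every vertex v ∈ V and every u in the closed neighborhood N[v] of v in G, add one edge from a distinct vertex of the larger side of v's choice gadget to the vertex u_d. Assign capacities: every vertex of G′ has capacity equal to its degree in G′, except each vertex v_d, which has capacity B+1. If G has a dominating set of size at most k, then G′ has a capacitated vertex cover of size at most n(B+2) + k. -/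
/-- The vertex set of the gadget graph `G′` built from a graph on `V` with degree
function `d` and parameter `B`:
* `Sum.inl (v, Sum.inl i)` — the `i`-th vertex of the smaller side (size `B+1`) of the
  choice gadget of `v`;
* `Sum.inl (v, Sum.inr j)` — the `j`-th vertex of the larger side (size `B+2`) of the
  choice gadget of `v`;
* `Sum.inr (Sum.inl v)` — the vertex `v_d` of the domination gadget of `v`;
* `Sum.inr (Sum.inr ⟨v, l⟩)` — the `l`-th of the `B − d(v) + 1` pendant leaves attached
  to `v_d`. -/
abbrev GadgetVert (V : Type*) (B : ℕ) (d : V → ℕ) : Type _ :=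
  (V × (Fin (B + 1) ⊕ Fin (B + 2))) ⊕ (V ⊕ (Σ v : V, Fin (B - d v + 1)))

/-- The generating relation of the gadget graph: each choice gadget is a complete bipartite
graph `K_{B+1,B+2}`; for every `v` and every `u` in the closed neighborhood of `v`, the
vertex `ι v u` of the larger side of `v`'s choice gadget is joined to `u_d`; each leaf
`⟨v, l⟩` is joined to `v_d`. -/
def gadgetRel {V : Type*} (G : SimpleGraph V) (B : ℕ) (d : V → ℕ)
    (ι : V → V → Fin (B + 2)) :
    GadgetVert V B d → GadgetVert V B d → Prop
  | Sum.inl (v, Sum.inl _), Sum.inl (w, Sum.inr _) => v = w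
  | Sum.inl (v, Sum.inr j), Sum.inr (Sum.inl u) => (G.Adj v u ∨ u = v) ∧ ι v u = j
  | Sum.inr (Sum.inl v), Sum.inr (Sum.inr ⟨w, _⟩) => v = w
  | _, _ => False

/-- The gadget graph `G′` constructed from `G`. -/
def gadgetGraph {V : Type*} (G : SimpleGraph V) (B : ℕ) (d : V → ℕ)
    (ι : V → V → Fin (B + 2)) : SimpleGraph (GadgetVert V B d) :=
  SimpleGraph.fromRel (gadgetRel G B d ι)

/-- The capacity function on the gadget graph: each vertex `v_d` has capacity `B + 1`;
every other vertex has capacity equal to its degree in the gadget graph. -/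
noncomputable def gadgetCap {V : Type*} (G : SimpleGraph V) (B : ℕ) (d : V → ℕ)
    (ι : V → V → Fin (B + 2)) : GadgetVert V B d → ℕ
  | Sum.inr (Sum.inl _) => B + 1
  | w => ((gadgetGraph G B d ι).neighborSet w).ncard

/-- A capacitated vertex cover of a graph `H` with capacities `c`: a vertex set `C`
together with an assignment of every edge of `H` to one of its endpoints lying in `C`,
such that every vertex `w ∈ C` is assigned at most `c w` edges. -/
def IsCapacitatedVertexCover {W : Type*} (H : SimpleGraph W) (c : W → ℕ) (C : Set W) : Prop :=
  ∃ f : Sym2 W → W, (∀ e ∈ H.edgeSet, f e ∈ e ∧ f e ∈ C) ∧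
    ∀ w ∈ C, {e | e ∈ H.edgeSet ∧ f e = w}.ncard ≤ c w

section Aux

variable {V : Type*} [DecidableEq V] {B : ℕ} {d : V → ℕ}

private theorem minsym {α : Type*} (r : α → ℕ) (hr : Function.Injective r) (a b : α) :
    (if r a ≤ r b then a else b) = (if r b ≤ r a then b else a) := by
  rcases lt_trichotomy (r a) (r b) with h | h | h
  · rw [if_pos h.le, if_neg (not_le.mpr h)]
  · rw [if_pos h.le, if_pos h.ge, hr h]
  · rw [if_neg (not_le.mpr h), if_pos h.le]

def gPick (S : Finset V) (r : GadgetVert V B d → ℕ) :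
    GadgetVert V B d → GadgetVert V B d → GadgetVert V B d
  | Sum.inl (v, Sum.inl i), Sum.inl (w, Sum.inr j) =>
      if v ∈ S then Sum.inl (w, Sum.inr j) else Sum.inl (v, Sum.inl i)
  | Sum.inl (w, Sum.inr j), Sum.inl (v, Sum.inl i) =>
      if v ∈ S then Sum.inl (w, Sum.inr j) else Sum.inl (v, Sum.inl i)
  | Sum.inl (v, Sum.inr j), Sum.inr (Sum.inl u) =>
      if v ∈ S then Sum.inl (v, Sum.inr j) else Sum.inr (Sum.inl u)
  | Sum.inr (Sum.inl u), Sum.inl (v, Sum.inr j) =>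
      if v ∈ S then Sum.inl (v, Sum.inr j) else Sum.inr (Sum.inl u)
  | Sum.inr (Sum.inl u), Sum.inr (Sum.inr _) => Sum.inr (Sum.inl u)
  | Sum.inr (Sum.inr _), Sum.inr (Sum.inl u) => Sum.inr (Sum.inl u)
  | a, b => if r a ≤ r b then a else b

theorem gPick_symm (S : Finset V) (r : GadgetVert V B d → ℕ) (hr : Function.Injective r)
    (a b : GadgetVert V B d) : gPick S r a b = gPick S r b a := by
  rcases a with ⟨va, ia | ja⟩ | (va | ⟨va, la⟩) <;>
    rcases b with ⟨vb, ib | jb⟩ | (vb | ⟨vb, lb⟩) <;>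
    first
      | rfl
      | exact minsym r hr _ _

theorem gPick_mem (S : Finset V) (r : GadgetVert V B d → ℕ)
    (a b : GadgetVert V B d) : gPick S r a b = a ∨ gPick S r a b = b := by
  rcases a with ⟨va, ia | ja⟩ | (va | ⟨va, la⟩) <;>
    rcases b with ⟨vb, ib | jb⟩ | (vb | ⟨vb, lb⟩) <;>
    simp only [gPick] <;> first | (split_ifs <;> simp) | simp

def coverSet (S : Finset V) : Set (GadgetVert V B d) := fun w =>
  match w with
  | Sum.inl (v, Sum.inl _) => v ∉ S
  | Sum.inl (v, Sum.inr _) => v ∈ S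
  | Sum.inr (Sum.inl _) => True
  | Sum.inr (Sum.inr _) => False

@[simp] theorem coverSet_A {S : Finset V} {v : V} {i : Fin (B + 1)} :
    (Sum.inl (v, Sum.inl i) : GadgetVert V B d) ∈ coverSet S ↔ v ∉ S := Iff.rfl
@[simp] theorem coverSet_L {S : Finset V} {v : V} {j : Fin (B + 2)} :
    (Sum.inl (v, Sum.inr j) : GadgetVert V B d) ∈ coverSet S ↔ v ∈ S := Iff.rfl
@[simp] theorem coverSet_D {S : Finset V} {v : V} :
    (Sum.inr (Sum.inl v) : GadgetVert V B d) ∈ coverSet S := trivial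
@[simp] theorem coverSet_F {S : Finset V} {x : Σ v : V, Fin (B - d v + 1)} :
    (Sum.inr (Sum.inr x) : GadgetVert V B d) ∈ coverSet S ↔ False := Iff.rfl

theorem gadgetRel_cases {G : SimpleGraph V} {ι : V → V → Fin (B + 2)}
    {a b : GadgetVert V B d} (h : gadgetRel G B d ι a b) :
    (∃ v i j, s(a, b) = s((Sum.inl (v, Sum.inl i) : GadgetVert V B d), Sum.inl (v, Sum.inr j))) ∨
    (∃ v u, (G.Adj v u ∨ u = v) ∧
      s(a, b) = s((Sum.inl (v, Sum.inr (ι v u)) : GadgetVert V B d), Sum.inr (Sum.inl u))) ∨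
    (∃ v l, s(a, b) = s((Sum.inr (Sum.inl v) : GadgetVert V B d), Sum.inr (Sum.inr ⟨v, l⟩))) := by
  rcases a with ⟨va, ia | ja⟩ | (va | ⟨va, la⟩) <;>
    rcases b with ⟨vb, ib | jb⟩ | (vb | ⟨vb, lb⟩) <;>
    simp only [gadgetRel] at h
  · obtain rfl := h
    exact Or.inl ⟨va, ia, jb, rfl⟩
  · obtain ⟨h1, rfl⟩ := h
    exact Or.inr (Or.inl ⟨va, vb, h1, rfl⟩)
  · obtain rfl := h
    exact Or.inr (Or.inr ⟨va, lb, rfl⟩)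

theorem gadgetAdj_cases {G : SimpleGraph V} {ι : V → V → Fin (B + 2)}
    {a b : GadgetVert V B d} (h : (gadgetGraph G B d ι).Adj a b) :
    (∃ v i j, s(a, b) = s((Sum.inl (v, Sum.inl i) : GadgetVert V B d), Sum.inl (v, Sum.inr j))) ∨
    (∃ v u, (G.Adj v u ∨ u = v) ∧
      s(a, b) = s((Sum.inl (v, Sum.inr (ι v u)) : GadgetVert V B d), Sum.inr (Sum.inl u))) ∨
    (∃ v l, s(a, b) = s((Sum.inr (Sum.inl v) : GadgetVert V B d), Sum.inr (Sum.inr ⟨v, l⟩))) := by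
  rw [gadgetGraph, SimpleGraph.fromRel_adj] at h
  rcases h.2 with h' | h'
  · exact gadgetRel_cases h'
  · rw [Sym2.eq_swap (a := a) (b := b)]
    exact gadgetRel_cases h'

def gEmb (S : Finset V) : GadgetVert V B d → (V × Fin (B + 2)) ⊕ {x // x ∈ S} := fun w =>
  match w with
  | Sum.inl (v, Sum.inl i) => Sum.inl (v, i.castSucc)
  | Sum.inl (v, Sum.inr j) => Sum.inl (v, j)
  | Sum.inr (Sum.inl v) =>
      if h : v ∈ S then Sum.inr ⟨v, h⟩ else Sum.inl (v, Fin.last (B + 1))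
  | Sum.inr (Sum.inr x) => Sum.inl (x.1, Fin.last (B + 1))

theorem assigned_le {W : Type*} [Finite W] (H : SimpleGraph W) (f : Sym2 W → W)
    (hf : ∀ e ∈ H.edgeSet, f e ∈ e) (w : W) :
    {e | e ∈ H.edgeSet ∧ f e = w}.ncard ≤ (H.neighborSet w).ncard := by
  have hsub : {e | e ∈ H.edgeSet ∧ f e = w} ⊆ (fun x => s(w, x)) '' H.neighborSet w := by
    intro e
    induction e using Sym2.ind with
    | _ a b =>
      rintro ⟨he, hfe⟩
      have hw : w ∈ s(a, b) := hfe ▸ hf _ he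
      rw [SimpleGraph.mem_edgeSet] at he
      rw [Sym2.mem_iff] at hw
      rcases hw with rfl | rfl
      · exact ⟨b, he, rfl⟩
      · exact ⟨a, he.symm, Sym2.eq_swap⟩
  exact le_trans (Set.ncard_le_ncard hsub (Set.toFinite _)) (Set.ncard_image_le (Set.toFinite _))

theorem gEmb_injOn (S : Finset V) :
    Set.InjOn (gEmb S) (coverSet S : Set (GadgetVert V B d)) := by
  intro x hx y hy hxy
  have hne : ∀ i : Fin (B + 1), i.castSucc ≠ Fin.last (B + 1) :=
    fun i => (Fin.castSucc_lt_last i).ne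
  rcases x with ⟨vx, ix | jx⟩ | (ux | xx) <;> rcases y with ⟨vy, iy | jy⟩ | (uy | xy) <;>
    simp only [gEmb, coverSet_A, coverSet_L, coverSet_D, coverSet_F] at hx hy hxy ⊢ <;>
    first
      | exact hx.elim
      | exact hy.elim
      | (split_ifs at hxy <;> simp_all)
      | simp_all
  all_goals exact (Fin.castSucc_lt_last _).ne hxy.2.symm

end Aux

/-- If G (finite, n vertices, maximum degree ≤ B) has a dominating set of
size at most k, then the gadget graph G′ with the capacities above has a capacitated vertex
cover of size at most n(B+2) + k. -/
theorem stmt_14 {V : Type*} [Fintype V] [DecidableEq V] (G : SimpleGraph V)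
    [DecidableRel G.Adj] (B k : ℕ) (hB : 0 < B) (hk : 0 < k)
    (hdeg : ∀ v : V, G.degree v ≤ B)
    (ι : V → V → Fin (B + 2))
    (hι : ∀ v : V, Set.InjOn (ι v) {u : V | G.Adj v u ∨ u = v})
    (S : Finset V) (hS : ∀ v : V, ∃ u ∈ S, u = v ∨ G.Adj u v) (hSk : S.card ≤ k) :
    ∃ C : Set (GadgetVert V B (fun v => G.degree v)),
      IsCapacitatedVertexCover (gadgetGraph G B (fun v => G.degree v) ι)
        (gadgetCap G B (fun v => G.degree v) ι) C ∧
      C.ncard ≤ Fintype.card V * (B + 2) + k := by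
  classical
  obtain ⟨r, hr⟩ : ∃ r : GadgetVert V B (fun v => G.degree v) → ℕ, Function.Injective r :=
    ⟨fun x => (Fintype.equivFin _ x : ℕ),
      fun x y h => (Fintype.equivFin _).injective (Fin.val_injective h)⟩
  set H := gadgetGraph G B (fun v => G.degree v) ι with hH
  let f : Sym2 (GadgetVert V B (fun v => G.degree v)) → GadgetVert V B (fun v => G.degree v) :=
    Sym2.lift ⟨gPick S r, gPick_symm S r hr⟩
  have hfmk : ∀ x y, f s(x, y) = gPick S r x y := fun _ _ => rfl
  have hcov : ∀ e ∈ H.edgeSet, f e ∈ e ∧ f e ∈ coverSet S := by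
    intro e
    induction e using Sym2.ind with
    | _ a b =>
      intro he
      rw [SimpleGraph.mem_edgeSet] at he
      rcases gadgetAdj_cases he with ⟨v, i, j, hE⟩ | ⟨v, u, hcond, hE⟩ | ⟨v, l, hE⟩ <;>
        rw [hE] <;> rw [hfmk] <;> simp only [gPick] <;>
        first
          | (split_ifs with hv <;> simp [hv])
          | simp
  have hfe : ∀ e ∈ H.edgeSet, f e ∈ e := fun e he => (hcov e he).1
  refine ⟨coverSet S, ⟨f, hcov, ?_⟩, ?_⟩
  · intro w hw
    rcases w with ⟨v, i | j⟩ | (u | x)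
    · exact assigned_le H f hfe _
    · exact assigned_le H f hfe _
    · -- the vertex u_d : capacity B + 1
      show _ ≤ B + 1
      set Leaf : Set (Sym2 (GadgetVert V B (fun v => G.degree v))) :=
        (fun l : Fin (B - G.degree u + 1) =>
          s((Sum.inr (Sum.inl u) : GadgetVert V B (fun v => G.degree v)),
            Sum.inr (Sum.inr ⟨u, l⟩))) '' Set.univ with hLeaf
      set Cross : Set (Sym2 (GadgetVert V B (fun v => G.degree v))) :=
        (fun v => s((Sum.inl (v, Sum.inr (ι v u)) : GadgetVert V B (fun v => G.degree v)),
            Sum.inr (Sum.inl u))) '' {v | (G.Adj v u ∨ u = v) ∧ v ∉ S} with hCross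
      have hsub : {e | e ∈ H.edgeSet ∧ f e = Sum.inr (Sum.inl u)} ⊆ Leaf ∪ Cross := by
        intro e
        induction e using Sym2.ind with
        | _ a b =>
          rintro ⟨he, hfeq⟩
          rw [SimpleGraph.mem_edgeSet] at he
          rcases gadgetAdj_cases he with ⟨v, i, j, hE⟩ | ⟨v, u', hcond, hE⟩ | ⟨v, l, hE⟩ <;>
            rw [hE] at hfeq ⊢ <;> rw [hfmk] at hfeq <;> simp only [gPick] at hfeq
          · split_ifs at hfeq <;> simp at hfeq
          · by_cases hv : v ∈ S
            · rw [if_pos hv] at hfeq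
              exact absurd hfeq (by simp)
            · rw [if_neg hv] at hfeq
              have h2 : u' = u := by simpa using hfeq
              subst h2
              exact Or.inr ⟨v, ⟨hcond, hv⟩, rfl⟩
          · have h2 : v = u := by simpa using hfeq
            subst h2
            exact Or.inl ⟨l, trivial, rfl⟩
      have hLc : Leaf.ncard ≤ B - G.degree u + 1 := by
        refine le_trans (Set.ncard_image_le (Set.toFinite _)) ?_
        simp [Set.ncard_univ]
      have hTc : ({v | (G.Adj v u ∨ u = v) ∧ v ∉ S} : Set V).ncard ≤ G.degree u := by
        obtain ⟨s0, hs0S, hs0⟩ := hS u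
        have hs0N : s0 ∈ insert u (G.neighborSet u) := by
          rcases hs0 with rfl | h
          · exact Set.mem_insert _ _
          · exact Set.mem_insert_of_mem _ h.symm
        have hTsub : {v | (G.Adj v u ∨ u = v) ∧ v ∉ S} ⊆ insert u (G.neighborSet u) \ {s0} := by
          rintro v ⟨hv1, hv2⟩
          refine ⟨?_, ?_⟩
          · rcases hv1 with h | rfl
            · exact Set.mem_insert_of_mem _ h.symm
            · exact Set.mem_insert _ _
          · simp only [Set.mem_singleton_iff]
            rintro rfl
            exact hv2 hs0S
        have hN : (insert u (G.neighborSet u)).ncard = G.degree u + 1 := by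
          rw [Set.ncard_insert_of_notMem (by simp) (Set.toFinite _)]
          congr 1
          rw [Set.ncard_eq_toFinset_card', ← SimpleGraph.neighborFinset_def]
          rfl
        calc ({v | (G.Adj v u ∨ u = v) ∧ v ∉ S} : Set V).ncard
            ≤ (insert u (G.neighborSet u) \ {s0}).ncard :=
              Set.ncard_le_ncard hTsub (Set.toFinite _)
          _ = (insert u (G.neighborSet u)).ncard - 1 :=
              Set.ncard_diff_singleton_of_mem hs0N
          _ = G.degree u := by rw [hN]; omega
      have hCc : Cross.ncard ≤ G.degree u :=
        le_trans (Set.ncard_image_le (Set.toFinite _)) hTc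
      have hdu : G.degree u ≤ B := hdeg u
      calc {e | e ∈ H.edgeSet ∧ f e = Sum.inr (Sum.inl u)}.ncard
          ≤ (Leaf ∪ Cross).ncard := Set.ncard_le_ncard hsub (Set.toFinite _)
        _ ≤ Leaf.ncard + Cross.ncard := Set.ncard_union_le _ _
        _ ≤ (B - G.degree u + 1) + G.degree u := Nat.add_le_add hLc hCc
        _ = B + 1 := by omega
    · exact (coverSet_F.mp hw).elim
  · -- counting
    have hinj := gEmb_injOn (B := B) (d := fun v => G.degree v) S
    have hle := Set.ncard_le_ncard_of_injOn (t := (Set.univ : Set ((V × Fin (B + 2)) ⊕ {x // x ∈ S}))) (gEmb S) (fun a _ => Set.mem_univ a) hinj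
      (Set.toFinite _)
    rw [Set.ncard_univ] at hle
    have hcard : Nat.card ((V × Fin (B + 2)) ⊕ {x // x ∈ S}) = Fintype.card V * (B + 2) + S.card := by
      simp [Nat.card_eq_fintype_card]
    rw [hcard] at hle
    omega
end

section
/- Let B and k be positive integers and let G = (V, E) be a finite simple graph on n vertices with maximum degree at most B. Let G′ = (V′, E′) be the graph constructed from G as follows: for every vertex v ∈ V take a choice gadget that is a complete bipartite graph K_{B+1,B+2} (with a smaller side of B+1 vertices and a larger side of B+2 vertices); for every vertex v ∈ V take a domination gadget consisting of a vertex v_d together with B − d(v) + 1 pendant leaves attached to v_d, where d(v) is the degree of v in G; and for every vertex v ∈ V and every u in the closed neighborhood N[v] of v in G, add one edge from a distinct vertex of the larger side of v's choice gadget to the vertex u_d. Assign capacities: every vertex of G′ has capacity equal to its degree in G′, except each vertex v_d, which has capacity B+1. If G′ has a capacitated vertex cover of size at most n(B+2) + k, then G has a dominating set of size at most k. -/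
namespace Gadget15

variable {V : Type*}

/-- Projection of a gadget vertex to the vertex of `G` it belongs to. -/
def projV {B : ℕ} {d : V → ℕ} : GadgetVert V B d → V
  | Sum.inl (v, _) => v
  | Sum.inr (Sum.inl v) => v
  | Sum.inr (Sum.inr ⟨v, _⟩) => v

variable {G : SimpleGraph V} {B : ℕ} {d : V → ℕ} {ι : V → V → Fin (B + 2)}

lemma adj_small_large (v : V) (i : Fin (B + 1)) (j : Fin (B + 2)) :
    (gadgetGraph G B d ι).Adj (Sum.inl (v, Sum.inl i)) (Sum.inl (v, Sum.inr j)) := by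
  rw [gadgetGraph, SimpleGraph.fromRel_adj]
  exact ⟨by simp, Or.inl rfl⟩

lemma adj_large_dom (v u : V) (h : G.Adj v u ∨ u = v) :
    (gadgetGraph G B d ι).Adj (Sum.inl (v, Sum.inr (ι v u))) (Sum.inr (Sum.inl u)) := by
  rw [gadgetGraph, SimpleGraph.fromRel_adj]
  exact ⟨by simp, Or.inl ⟨h, rfl⟩⟩

lemma adj_dom_leaf (v : V) (l : Fin (B - d v + 1)) :
    (gadgetGraph G B d ι).Adj (Sum.inr (Sum.inl v)) (Sum.inr (Sum.inr ⟨v, l⟩)) := by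
  rw [gadgetGraph, SimpleGraph.fromRel_adj]
  exact ⟨by simp, Or.inl rfl⟩


theorem main_lemma {V : Type*} [Fintype V] [DecidableEq V] (G : SimpleGraph V)
    [DecidableRel G.Adj] (B k : ℕ)
    (d : V → ℕ) (hdd : ∀ v : V, d v = G.degree v)
    (hdeg : ∀ v : V, G.degree v ≤ B)
    (ι : V → V → Fin (B + 2))
    (C : Set (GadgetVert V B d))
    (hC : IsCapacitatedVertexCover (gadgetGraph G B d ι) (gadgetCap G B d ι) C)
    (hCcard : C.ncard ≤ Fintype.card V * (B + 2) + k) :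
    ∃ S : Finset V, (∀ v : V, ∃ u ∈ S, u = v ∨ G.Adj u v) ∧ S.card ≤ k := by
  classical
  obtain ⟨f, hf1, hf2⟩ := hC
  -- every edge's assigned endpoint lies on the edge and in C
  have hmem : ∀ a b : GadgetVert V B d, (gadgetGraph G B d ι).Adj a b →
      (f s(a, b) = a ∨ f s(a, b) = b) ∧ f s(a, b) ∈ C := by
    intro a b hab
    have h := hf1 s(a, b) (by rwa [SimpleGraph.mem_edgeSet])
    exact ⟨Sym2.mem_iff.1 h.1, h.2⟩
  -- each choice gadget contributes a biclique vertex cover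
  have hbi : ∀ v : V,
      (∀ i : Fin (B + 1), (Sum.inl (v, Sum.inl i) : GadgetVert V B d) ∈ C) ∨
      (∀ j : Fin (B + 2), (Sum.inl (v, Sum.inr j) : GadgetVert V B d) ∈ C) := by
    intro v
    by_contra hcon
    push_neg at hcon
    obtain ⟨⟨i, hi⟩, j, hj⟩ := hcon
    obtain ⟨hor, hfC⟩ := hmem _ _ (adj_small_large (G := G) (ι := ι) v i j)
    rcases hor with h | h
    · exact hi (h ▸ hfC)
    · exact hj (h ▸ hfC)
  -- the region of a vertex `u` : cover vertices projecting to `u`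
  set reg : V → Finset (GadgetVert V B d) :=
    fun u => C.toFinset.filter (fun x => projV x = u) with hreg
  have hregmem : ∀ (x : GadgetVert V B d) (u : V), x ∈ reg u ↔ x ∈ C ∧ projV x = u := by
    intro x u
    simp [hreg]
  have hcard_small : ∀ v : V,
      ((Finset.univ : Finset (Fin (B + 1))).image
        (fun i => (Sum.inl (v, Sum.inl i) : GadgetVert V B d))).card = B + 1 := by
    intro v
    rw [Finset.card_image_of_injective _ (fun a b h => by simpa using h)]
    simp
  have hcard_large : ∀ v : V,
      ((Finset.univ : Finset (Fin (B + 2))).image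
        (fun j => (Sum.inl (v, Sum.inr j) : GadgetVert V B d))).card = B + 2 := by
    intro v
    rw [Finset.card_image_of_injective _ (fun a b h => by simpa using h)]
    simp
  -- base : at least B+1 choice-gadget vertices in each region
  have hbase1 : ∀ v : V, ∃ T : Finset (GadgetVert V B d),
      T ⊆ reg v ∧ (∀ x ∈ T, ∃ p, x = Sum.inl p) ∧ B + 1 ≤ T.card := by
    intro v
    rcases hbi v with h | h
    · refine ⟨_, ?_, ?_, (hcard_small v).ge⟩
      · intro x hx
        simp only [Finset.mem_image, Finset.mem_univ, true_and] at hx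
        obtain ⟨i, rfl⟩ := hx
        exact (hregmem _ _).2 ⟨h i, rfl⟩
      · intro x hx
        simp only [Finset.mem_image, Finset.mem_univ, true_and] at hx
        obtain ⟨i, rfl⟩ := hx
        exact ⟨_, rfl⟩
    · refine ⟨_, ?_, ?_, le_of_le_of_eq (by omega) (hcard_large v).symm⟩
      · intro x hx
        simp only [Finset.mem_image, Finset.mem_univ, true_and] at hx
        obtain ⟨j, rfl⟩ := hx
        exact (hregmem _ _).2 ⟨h j, rfl⟩
      · intro x hx
        simp only [Finset.mem_image, Finset.mem_univ, true_and] at hx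
        obtain ⟨j, rfl⟩ := hx
        exact ⟨_, rfl⟩
  -- if moreover a large-side vertex of v is in C : at least B+2
  have hbase2 : ∀ (v : V) (j : Fin (B + 2)),
      (Sum.inl (v, Sum.inr j) : GadgetVert V B d) ∈ C →
      ∃ T : Finset (GadgetVert V B d),
      T ⊆ reg v ∧ (∀ x ∈ T, ∃ p, x = Sum.inl p) ∧ B + 2 ≤ T.card := by
    intro v j hj
    rcases hbi v with h | h
    · refine ⟨insert (Sum.inl (v, Sum.inr j))
        ((Finset.univ : Finset (Fin (B + 1))).image
          (fun i => (Sum.inl (v, Sum.inl i) : GadgetVert V B d))), ?_, ?_, ?_⟩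
      · refine Finset.insert_subset ((hregmem _ _).2 ⟨hj, rfl⟩) ?_
        intro x hx
        simp only [Finset.mem_image, Finset.mem_univ, true_and] at hx
        obtain ⟨i, rfl⟩ := hx
        exact (hregmem _ _).2 ⟨h i, rfl⟩
      · intro x hx
        rcases Finset.mem_insert.1 hx with rfl | hx
        · exact ⟨_, rfl⟩
        · simp only [Finset.mem_image, Finset.mem_univ, true_and] at hx
          obtain ⟨i, rfl⟩ := hx
          exact ⟨_, rfl⟩
      · rw [Finset.card_insert_of_notMem (by simp), hcard_small v]
    · refine ⟨_, ?_, ?_, (hcard_large v).ge⟩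
      · intro x hx
        simp only [Finset.mem_image, Finset.mem_univ, true_and] at hx
        obtain ⟨j', rfl⟩ := hx
        exact (hregmem _ _).2 ⟨h j', rfl⟩
      · intro x hx
        simp only [Finset.mem_image, Finset.mem_univ, true_and] at hx
        obtain ⟨j', rfl⟩ := hx
        exact ⟨_, rfl⟩
  -- an extra (non-choice-gadget) vertex in each region, from the leaf edge
  have hextra : ∀ v : V, ∃ x : GadgetVert V B d, x ∈ reg v ∧ ∀ p, x ≠ Sum.inl p := by
    intro v
    obtain ⟨hor, hfC⟩ :=
      hmem _ _ (adj_dom_leaf (G := G) (ι := ι) v ⟨0, Nat.succ_pos _⟩)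
    rcases hor with h | h
    · exact ⟨Sum.inr (Sum.inl v), (hregmem _ _).2 ⟨h ▸ hfC, rfl⟩, fun p => by simp⟩
    · exact ⟨Sum.inr (Sum.inr ⟨v, ⟨0, Nat.succ_pos _⟩⟩),
        (hregmem _ _).2 ⟨h ▸ hfC, rfl⟩, fun p => by simp⟩
  -- every region has at least B+2 cover vertices
  have hR1 : ∀ v : V, B + 2 ≤ (reg v).card := by
    intro v
    obtain ⟨T, hT1, hT2, hT3⟩ := hbase1 v
    obtain ⟨x, hx1, hx2⟩ := hextra v
    have hxT : x ∉ T := fun hxT => by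
      obtain ⟨p, rfl⟩ := hT2 x hxT
      exact hx2 p rfl
    calc B + 2 ≤ (insert x T).card := by
          rw [Finset.card_insert_of_notMem hxT]; omega
      _ ≤ (reg v).card := Finset.card_le_card (Finset.insert_subset hx1 hT1)
  -- regions with a large-side vertex in C have at least B+3 cover vertices
  have hR2 : ∀ (v : V) (j : Fin (B + 2)),
      (Sum.inl (v, Sum.inr j) : GadgetVert V B d) ∈ C → B + 3 ≤ (reg v).card := by
    intro v j hj
    obtain ⟨T, hT1, hT2, hT3⟩ := hbase2 v j hj
    obtain ⟨x, hx1, hx2⟩ := hextra v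
    have hxT : x ∉ T := fun hxT => by
      obtain ⟨p, rfl⟩ := hT2 x hxT
      exact hx2 p rfl
    calc B + 3 ≤ (insert x T).card := by
          rw [Finset.card_insert_of_notMem hxT]; omega
      _ ≤ (reg v).card := Finset.card_le_card (Finset.insert_subset hx1 hT1)
  -- regions with both v_d and a leaf in C have at least B+3 cover vertices
  have hR3 : ∀ (v : V) (l : Fin (B - d v + 1)),
      (Sum.inr (Sum.inl v) : GadgetVert V B d) ∈ C →
      (Sum.inr (Sum.inr ⟨v, l⟩) : GadgetVert V B d) ∈ C → B + 3 ≤ (reg v).card := by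
    intro v l h1 h2
    obtain ⟨T, hT1, hT2, hT3⟩ := hbase1 v
    have hx2T : (Sum.inr (Sum.inr ⟨v, l⟩) : GadgetVert V B d) ∉ T := fun hxT => by
      obtain ⟨p, hp⟩ := hT2 _ hxT
      exact absurd hp (by simp)
    have hx1T : (Sum.inr (Sum.inl v) : GadgetVert V B d) ∉
        insert (Sum.inr (Sum.inr ⟨v, l⟩) : GadgetVert V B d) T := by
      rw [Finset.mem_insert]
      rintro (h | hxT)
      · exact absurd h (by simp)
      · obtain ⟨p, hp⟩ := hT2 _ hxT
        exact absurd hp (by simp)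
    calc B + 3 ≤ (insert (Sum.inr (Sum.inl v) : GadgetVert V B d)
          (insert (Sum.inr (Sum.inr ⟨v, l⟩) : GadgetVert V B d) T)).card := by
          rw [Finset.card_insert_of_notMem hx1T, Finset.card_insert_of_notMem hx2T]
          omega
      _ ≤ (reg v).card := Finset.card_le_card
          (Finset.insert_subset ((hregmem _ _).2 ⟨h1, rfl⟩)
            (Finset.insert_subset ((hregmem _ _).2 ⟨h2, rfl⟩) hT1))
  -- domination: every v has a closed neighbor whose region is large
  have hdom : ∀ v : V, ∃ u : V, (u = v ∨ G.Adj u v) ∧ B + 3 ≤ (reg u).card := by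
    intro v
    by_cases hvd : (Sum.inr (Sum.inl v) : GadgetVert V B d) ∈ C
    · -- capacity argument at v_d
      have hdv : d v ≤ B := (hdd v).trans_le (hdeg v)
      set A : Finset (Sym2 (GadgetVert V B d)) :=
        ((G.neighborFinset v ∪ {v}).image
          (fun u => s(Sum.inl (u, Sum.inr (ι u v)), Sum.inr (Sum.inl v)))) ∪
        ((Finset.univ : Finset (Fin (B - d v + 1))).image
          (fun l => s(Sum.inr (Sum.inl v), Sum.inr (Sum.inr ⟨v, l⟩)))) with hA
      have hAedge : ∀ e ∈ A, e ∈ (gadgetGraph G B d ι).edgeSet := by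
        intro e he
        rw [hA, Finset.mem_union] at he
        rcases he with he | he
        · simp only [Finset.mem_image] at he
          obtain ⟨u, hu, rfl⟩ := he
          rw [SimpleGraph.mem_edgeSet]
          refine adj_large_dom u v ?_
          simp only [Finset.mem_union, Finset.mem_singleton,
            SimpleGraph.mem_neighborFinset] at hu
          rcases hu with hu | hu
          · exact Or.inl hu.symm
          · exact Or.inr hu.symm
        · simp only [Finset.mem_image, Finset.mem_univ, true_and] at he
          obtain ⟨l, rfl⟩ := he
          exact (SimpleGraph.mem_edgeSet _).2 (adj_dom_leaf v l)
      have hinj1 : Function.Injective (fun u : V =>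
          s(Sum.inl (u, Sum.inr (ι u v)), (Sum.inr (Sum.inl v) : GadgetVert V B d))) := by
        intro a b h
        simp only [Sym2.eq_iff] at h
        rcases h with ⟨h1, -⟩ | ⟨h1, -⟩
        · obtain ⟨h2, -⟩ : a = b ∧ ι a v = ι b v := by simpa using h1
          exact h2
        · simp at h1
      have hinj2 : Function.Injective (fun l : Fin (B - d v + 1) =>
          s((Sum.inr (Sum.inl v) : GadgetVert V B d), Sum.inr (Sum.inr ⟨v, l⟩))) := by
        intro a b h
        simp only [Sym2.eq_iff] at h
        rcases h with ⟨-, h1⟩ | ⟨h1, -⟩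
        · simpa using h1
        · simp at h1
      have hdisj : Disjoint
          ((G.neighborFinset v ∪ {v}).image
            (fun u => s(Sum.inl (u, Sum.inr (ι u v)), (Sum.inr (Sum.inl v) : GadgetVert V B d))))
          ((Finset.univ : Finset (Fin (B - d v + 1))).image
            (fun l => s((Sum.inr (Sum.inl v) : GadgetVert V B d), Sum.inr (Sum.inr ⟨v, l⟩)))) := by
        rw [Finset.disjoint_left]
        intro e he1 he2
        simp only [Finset.mem_image] at he1 he2
        obtain ⟨u, -, rfl⟩ := he1
        obtain ⟨l, -, he⟩ := he2
        simp [Sym2.eq_iff] at he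
      have hNcard : (G.neighborFinset v ∪ {v}).card = d v + 1 := by
        rw [Finset.card_union_of_disjoint (by simp),
          SimpleGraph.card_neighborFinset_eq_degree, hdd v]
        simp
      have hAcard : A.card = B + 2 := by
        rw [hA, Finset.card_union_of_disjoint hdisj,
          Finset.card_image_of_injective _ hinj1, Finset.card_image_of_injective _ hinj2,
          hNcard, Finset.card_univ, Fintype.card_fin]
        omega
      by_cases hall : ∀ e ∈ A, f e = Sum.inr (Sum.inl v)
      · exfalso
        have hsub : (↑A : Set (Sym2 (GadgetVert V B d))) ⊆
            {e | e ∈ (gadgetGraph G B d ι).edgeSet ∧ f e = Sum.inr (Sum.inl v)} :=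
          fun e he => ⟨hAedge e (Finset.mem_coe.1 he), hall e (Finset.mem_coe.1 he)⟩
        have h1 : B + 2 ≤
            {e | e ∈ (gadgetGraph G B d ι).edgeSet ∧ f e = Sum.inr (Sum.inl v)}.ncard := by
          have h0 := Set.ncard_le_ncard hsub (Set.toFinite _)
          rwa [Set.ncard_coe_finset, hAcard] at h0
        have h2 := hf2 _ hvd
        have h3 : gadgetCap G B d ι (Sum.inr (Sum.inl v)) = B + 1 := rfl
        omega
      · push_neg at hall
        obtain ⟨e, heA, hne⟩ := hall
        rw [hA, Finset.mem_union] at heA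
        rcases heA with he | he
        · simp only [Finset.mem_image] at he
          obtain ⟨u, hu, rfl⟩ := he
          simp only [Finset.mem_union, Finset.mem_singleton,
            SimpleGraph.mem_neighborFinset] at hu
          have hadj : G.Adj u v ∨ v = u := by
            rcases hu with hu | hu
            · exact Or.inl hu.symm
            · exact Or.inr hu.symm
          obtain ⟨hor, hfC⟩ := hmem _ _ (adj_large_dom (ι := ι) u v hadj)
          rcases hor with h | h
          · refine ⟨u, ?_, hR2 u (ι u v) (h ▸ hfC)⟩
            rcases hu with hu | hu
            · exact Or.inr hu.symm
            · exact Or.inl hu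
          · exact absurd h hne
        · simp only [Finset.mem_image, Finset.mem_univ, true_and] at he
          obtain ⟨l, rfl⟩ := he
          obtain ⟨hor, hfC⟩ := hmem _ _ (adj_dom_leaf (G := G) (ι := ι) v l)
          rcases hor with h | h
          · exact absurd h hne
          · exact ⟨v, Or.inl rfl, hR3 v l hvd (h ▸ hfC)⟩
    · -- v_d not in C: the edge from v's own large side forces a large vertex in C
      obtain ⟨hor, hfC⟩ := hmem _ _ (adj_large_dom (ι := ι) v v (Or.inr rfl))
      rcases hor with h | h
      · exact ⟨v, Or.inl rfl, hR2 v (ι v v) (h ▸ hfC)⟩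
      · exact absurd (h ▸ hfC) hvd
  -- counting
  have hfiber : C.toFinset.card = ∑ u : V, (reg u).card := by
    simp only [hreg]
    exact Finset.card_eq_sum_card_fiberwise (fun x _ => Finset.mem_univ (projV x))
  have hCfin : C.toFinset.card ≤ Fintype.card V * (B + 2) + k := by
    rwa [← Set.ncard_eq_toFinset_card']
  set S : Finset V := Finset.univ.filter (fun u => B + 3 ≤ (reg u).card) with hS
  have hsum2 : ∑ u : V, ((B + 2) + if B + 3 ≤ (reg u).card then 1 else 0)
      ≤ ∑ u : V, (reg u).card :=
    Finset.sum_le_sum (fun u _ => by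
      split
      · next h => omega
      · simpa using hR1 u)
  have hsum3 : ∑ u : V, ((B + 2) + if B + 3 ≤ (reg u).card then 1 else 0)
      = Fintype.card V * (B + 2) + S.card := by
    rw [Finset.sum_add_distrib, Finset.sum_const, smul_eq_mul, hS, Finset.card_filter]
    simp [Finset.card_univ]
  have hfinal : S.card ≤ k := by
    have h5 : Fintype.card V * (B + 2) + S.card ≤ Fintype.card V * (B + 2) + k := by
      calc Fintype.card V * (B + 2) + S.card
          = ∑ u : V, ((B + 2) + if B + 3 ≤ (reg u).card then 1 else 0) := hsum3.symm
        _ ≤ ∑ u : V, (reg u).card := hsum2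
        _ = C.toFinset.card := hfiber.symm
        _ ≤ Fintype.card V * (B + 2) + k := hCfin
    exact Nat.le_of_add_le_add_left h5
  refine ⟨S, fun v => ?_, hfinal⟩
  obtain ⟨u, hu1, hu2⟩ := hdom v
  refine ⟨u, ?_, hu1⟩
  rw [hS]
  exact Finset.mem_filter.2 ⟨Finset.mem_univ _, hu2⟩

end Gadget15

/-- If the gadget graph G′ (built from a finite graph G on n vertices with
maximum degree ≤ B) with the capacities above has a capacitated vertex cover of size at
most n(B+2) + k, then G has a dominating set of size at most k. -/
theorem stmt_15 {V : Type*} [Fintype V] [DecidableEq V] (G : SimpleGraph V)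
    [DecidableRel G.Adj] (B k : ℕ) (hB : 0 < B) (hk : 0 < k)
    (hdeg : ∀ v : V, G.degree v ≤ B)
    (ι : V → V → Fin (B + 2))
    (hι : ∀ v : V, Set.InjOn (ι v) {u : V | G.Adj v u ∨ u = v})
    (C : Set (GadgetVert V B (fun v => G.degree v)))
    (hC : IsCapacitatedVertexCover (gadgetGraph G B (fun v => G.degree v) ι)
      (gadgetCap G B (fun v => G.degree v) ι) C)
    (hCcard : C.ncard ≤ Fintype.card V * (B + 2) + k) :
    ∃ S : Finset V, (∀ v : V, ∃ u ∈ S, u = v ∨ G.Adj u v) ∧ S.card ≤ k :=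
  Gadget15.main_lemma G B k (fun v => G.degree v) (fun _ => rfl) hdeg ι C hC hCcard
end
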